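/- Let d ≥ 1, d < s < d + 1, and set α = s − d ∈ (0,1). Let (w_i(x))_{i ≥ 1, x ∈ ℤᵈ} be independent Bernoulli variables with P(w_i(x) = 1) ≤ C‖x‖^{−s} for x ≠ 0. Then there exists c > 0 such that for all n large enough and all y > 0: P( n^{−1/α} · ∑_{i=1}^{n} ∑_{x ∈ ℤᵈ} ‖x‖ · w_i(x) > y ) ≤ c · y^{−α}. -/

import Mathlib

open MeasureTheory ProbabilityTheory

section prelim
open Real Filter Finset


lemma bern_pos (b : ℝ) (hb0 : 0 ≤ b) (hb1 : b ≤ 1) (m : ℝ) (hm : 0 ≤ m) :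
    b * (m+1) ^ (b-1) ≤ (m+1) ^ b - m ^ b := by
  have hm1 : (0:ℝ) < m + 1 := by linarith
  have hv : -1 ≤ -(1/(m+1)) := by
    rw [neg_le_neg_iff]
    rw [div_le_one hm1]; linarith
  have hber := rpow_one_add_le_one_add_mul_self hv hb0 hb1
  have h1 : 1 + -(1/(m+1)) = m / (m+1) := by field_simp; ring
  rw [h1] at hber
  have h2 : (m/(m+1)) ^ b = m ^ b * ((m+1) ^ b)⁻¹ := by
    rw [div_rpow hm hm1.le, div_eq_mul_inv]
  rw [h2] at hber
  have hp : (0:ℝ) < (m+1) ^ b := rpow_pos_of_pos hm1 b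
  have := mul_le_mul_of_nonneg_right hber hp.le
  rw [mul_assoc, inv_mul_cancel₀ hp.ne', mul_one] at this
  have h3 : (1 + b * -(1/(m+1))) * (m+1) ^ b = (m+1)^b - b * (m+1)^(b-1) := by
    have : (m+1) ^ (b-1) = (m+1)^b * (m+1)⁻¹ := by
      rw [rpow_sub hm1, rpow_one, div_eq_mul_inv]
    rw [this]; field_simp; ring
  rw [h3] at this
  linarith

lemma bern_neg (a : ℝ) (ha0 : 0 < a) (ha1 : a < 1) (m : ℝ) (hm : 1 ≤ m) :
    a * (m+1) ^ (-1-a) ≤ m ^ (-a) - (m+1) ^ (-a) := by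
  have hm0 : (0:ℝ) < m := by linarith
  have hm1 : (0:ℝ) < m + 1 := by linarith
  set v : ℝ := 1/(m+1) with hv
  have hv0 : 0 < v := by positivity
  have hv1 : v ≤ 1/2 := by
    rw [hv, div_le_div_iff₀ hm1 (by norm_num)]; linarith
  have hber : (1 + -v) ^ a ≤ 1 + a * -v :=
    rpow_one_add_le_one_add_mul_self (by rw [hv]; rw [neg_le_neg_iff, div_le_one hm1]; linarith) ha0.le ha1.le
  have h1 : 1 + -v = m / (m+1) := by rw [hv]; field_simp; ring
  have hav : 0 < 1 - a * v := by nlinarith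
  -- (m/(m+1))^(-a) ≥ 1/(1 - a v) ≥ 1 + a v
  have h2 : (m/(m+1)) ^ (-a) = ((m/(m+1)) ^ a)⁻¹ := by
    rw [rpow_neg (by positivity)]
  have hpos : (0:ℝ) < (m/(m+1)) ^ a := rpow_pos_of_pos (by positivity) a
  have h3 : (1 - a*v)⁻¹ ≤ (m/(m+1)) ^ (-a) := by
    rw [h2]
    exact inv_anti₀ hpos (by rw [← h1]; linarith)
  have h4 : 1 + a*v ≤ (1 - a*v)⁻¹ := by
    rw [← mul_le_mul_iff_of_pos_right hav, inv_mul_cancel₀ hav.ne']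
    nlinarith [sq_nonneg (a*v)]
  have h5 : 1 + a*v ≤ (m/(m+1)) ^ (-a) := h4.trans h3
  have h6 : (m+1) ^ (-a) * (m/(m+1)) ^ (-a) = m ^ (-a) := by
    rw [← mul_rpow hm1.le (by positivity)]
    congr 1; field_simp
  have hp1 : (0:ℝ) < (m+1) ^ (-a) := rpow_pos_of_pos hm1 _
  have h7 : (m+1) ^ (-a) * (1 + a*v) ≤ m ^ (-a) := by
    rw [← h6]; exact mul_le_mul_of_nonneg_left h5 hp1.le
  have h8 : (m+1) ^ (-a) * (1 + a*v) = (m+1)^(-a) + a * (m+1)^(-1-a) := by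
    have : (m+1) ^ (-1-a) = (m+1)^(-a) * (m+1)⁻¹ := by
      rw [show (-1-a : ℝ) = -a + -1 by ring, rpow_add hm1, rpow_neg_one]
    rw [this, hv]; field_simp
  rw [h8] at h7
  linarith

lemma tail_sum (a : ℝ) (ha0 : 0 < a) (ha1 : a < 1) (K : ℕ) (hK : 1 ≤ K) :
    ∑' j : ℕ, ((K + 1 + j : ℕ) : ℝ) ^ (-1-a) ≤ (K:ℝ) ^ (-a) / a := by
  have hKR : (1:ℝ) ≤ K := by exact_mod_cast hK
  set G : ℕ → ℝ := fun j => ((K:ℝ)+j) ^ (-a) with hGdef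
  have hterm : ∀ j : ℕ, ((K + 1 + j : ℕ) : ℝ) ^ (-1-a) ≤ (G j - G (j+1)) / a := by
    intro j
    have hm : (1:ℝ) ≤ (K:ℝ) + j := by
      have : (0:ℝ) ≤ (j:ℝ) := Nat.cast_nonneg j
      linarith
    have := bern_neg a ha0 ha1 ((K:ℝ)+j) hm
    have hc1 : ((K + 1 + j : ℕ) : ℝ) = (K:ℝ) + j + 1 := by push_cast; ring
    rw [hc1, le_div_iff₀ ha0]
    simp only [hGdef]
    have hc2 : ((K:ℝ) + ↑(j+1)) = (K:ℝ) + ↑j + 1 := by push_cast; ring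
    rw [hc2]
    nlinarith [this]
  have hG0 : Tendsto G atTop (nhds 0) := by
    have h1 : Tendsto (fun j : ℕ => (K:ℝ) + j) atTop atTop :=
      tendsto_atTop_add_const_left _ _ tendsto_natCast_atTop_atTop
    exact (tendsto_rpow_neg_atTop ha0).comp h1
  have hnn : ∀ j, 0 ≤ G j - G (j+1) := by
    intro j
    have hm : (1:ℝ) ≤ (K:ℝ) + j := by
      have : (0:ℝ) ≤ (j:ℝ) := Nat.cast_nonneg j
      linarith
    have h := bern_neg a ha0 ha1 ((K:ℝ)+j) hm
    have hp : 0 < a * ((K:ℝ)+j+1) ^ (-1-a) := by positivity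
    simp only [hGdef]
    have hc2 : ((K:ℝ) + ↑(j+1)) = (K:ℝ) + ↑j + 1 := by push_cast; ring
    rw [hc2]
    nlinarith
  have hGsum : HasSum (fun j => G j - G (j+1)) (G 0) := by
    rw [hasSum_iff_tendsto_nat_of_nonneg hnn]
    have hps : ∀ n, ∑ i ∈ Finset.range n, (G i - G (i+1)) = G 0 - G n := fun n =>
      Finset.sum_range_sub' G n
    simp only [hps]
    simpa using tendsto_const_nhds.sub hG0
  have hsumf : Summable (fun j : ℕ => ((K + 1 + j : ℕ) : ℝ) ^ (-1-a)) := by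
    have hs : Summable (fun n : ℕ => (n:ℝ) ^ (-1-a)) :=
      Real.summable_nat_rpow.2 (by linarith)
    have := (summable_nat_add_iff (f := fun n : ℕ => (n:ℝ) ^ (-1-a)) (K+1)).2 hs
    refine this.congr (fun j => ?_)
    congr 2
    omega
  have := Summable.tsum_le_tsum hterm hsumf ((hGsum.summable).div_const a)
  refine this.trans ?_
  rw [tsum_div_const, hGsum.tsum_eq]
  simp only [hGdef]
  norm_num

lemma head_sum (a : ℝ) (ha0 : 0 < a) (ha1 : a < 1) (K : ℕ) :
    ∑ k ∈ Finset.range (K+1), (k:ℝ) ^ (-a) ≤ (K:ℝ) ^ (1-a) / (1-a) := by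
  have hb0 : (0:ℝ) < 1 - a := by linarith
  have h0 : ((0:ℕ):ℝ) ^ (-a) = 0 := by
    rw [Nat.cast_zero, Real.zero_rpow (by linarith)]
  rw [Finset.sum_range_succ']
  set H : ℕ → ℝ := fun i => ((i:ℕ):ℝ) ^ (1-a) with hHdef
  have hterm : ∀ i : ℕ, ((i+1:ℕ):ℝ) ^ (-a) ≤ (H (i+1) - H i) / (1-a) := by
    intro i
    have := bern_pos (1-a) hb0.le (by linarith) (i:ℝ) (Nat.cast_nonneg i)
    rw [le_div_iff₀ hb0]
    have hc : ((i+1:ℕ):ℝ) = (i:ℝ)+1 := by push_cast; ring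
    simp only [hHdef, hc]
    have he : (1 - a - 1 : ℝ) = -a := by ring
    nlinarith [this, he ▸ this]
  calc ∑ i ∈ Finset.range K, ((i+1:ℕ):ℝ) ^ (-a) + ((0:ℕ):ℝ) ^ (-a)
      ≤ ∑ i ∈ Finset.range K, (H (i+1) - H i) / (1-a) + 0 := by
        gcongr with i hi
        · exact hterm i
        · rw [h0]
    _ = (H K - H 0) / (1-a) := by
        rw [add_zero, ← Finset.sum_div, Finset.sum_range_sub H]
    _ = (K:ℝ) ^ (1-a) / (1-a) := by
        simp only [hHdef, Nat.cast_zero, Real.zero_rpow (by linarith : (1:ℝ)-a ≠ 0), sub_zero]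

def latNN (d : ℕ) (x : Fin d → ℤ) : ℕ := Finset.univ.sup fun j => (x j).natAbs

noncomputable def latBox (d k : ℕ) : Finset (Fin d → ℤ) :=
  Fintype.piFinset fun _ => Finset.Icc (-(k:ℤ)) (k:ℤ)

noncomputable def latSh (d k : ℕ) : Finset (Fin d → ℤ) := (latBox d k).filter fun x => latNN d x = k

lemma mem_latBox {d k : ℕ} {x : Fin d → ℤ} : x ∈ latBox d k ↔ latNN d x ≤ k := by
  simp only [latBox, Fintype.mem_piFinset, Finset.mem_Icc, latNN, Finset.sup_le_iff,
    Finset.mem_univ, forall_true_left]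
  refine forall_congr' fun j => ?_
  omega

lemma card_latBox (d k : ℕ) : (latBox d k).card = (2*k+1)^d := by
  rw [latBox, Fintype.card_piFinset]
  simp only [Int.card_Icc]
  rw [Finset.prod_const, Finset.card_univ, Fintype.card_fin]
  congr 1
  omega

lemma latNN_preimage (d k : ℕ) : (latNN d) ⁻¹' {k} = ↑(latSh d k) := by
  ext x
  simp only [Set.mem_preimage, Set.mem_singleton_iff, latSh, Finset.coe_filter,
    Set.mem_setOf_eq, mem_latBox]
  constructor
  · intro h; exact ⟨h.le, h⟩
  · intro h; exact h.2

lemma tsum_latNN (d : ℕ) (F : ℕ → ENNReal) :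
    ∑' x : Fin d → ℤ, F (latNN d x) = ∑' k : ℕ, (latSh d k).card * F k := by
  rw [← ENNReal.tsum_fiberwise (fun x => F (latNN d x)) (latNN d)]
  refine tsum_congr fun k => ?_
  rw [latNN_preimage d k]
  have h1 : ∀ b : ((latSh d k : Finset _) : Set (Fin d → ℤ)), F (latNN d b) = F k := by
    rintro ⟨b, hb⟩
    simp only [Finset.mem_coe, latSh, Finset.mem_filter] at hb
    rw [hb.2]
  rw [tsum_congr h1, Finset.tsum_subtype' (latSh d k) (fun _ => F k), Finset.sum_const,
    nsmul_eq_mul]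

lemma card_latSh (d : ℕ) (hd : 1 ≤ d) (k : ℕ) (hk : 1 ≤ k) :
    ((latSh d k).card : ℝ) ≤ (2*d*3^(d-1) : ℕ) * (k:ℝ)^(d-1) := by
  have hsub : latBox d (k-1) ⊆ latBox d k := by
    intro x hx
    rw [mem_latBox] at *
    omega
  have hsh : latSh d k ⊆ latBox d k \ latBox d (k-1) := by
    intro x hx
    rw [latSh, Finset.mem_filter] at hx
    rw [Finset.mem_sdiff, mem_latBox, mem_latBox]
    omega
  have hcard : (latSh d k).card ≤ (2*k+1)^d - (2*(k-1)+1)^d := by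
    calc (latSh d k).card ≤ (latBox d k \ latBox d (k-1)).card := Finset.card_le_card hsh
      _ = (latBox d k).card - (latBox d (k-1)).card := Finset.card_sdiff_of_subset hsub
      _ = (2*k+1)^d - (2*(k-1)+1)^d := by rw [card_latBox, card_latBox]
  have hle : (2*(k-1)+1)^d ≤ (2*k+1)^d := Nat.pow_le_pow_left (by omega) d
  have hcast : ((latSh d k).card : ℝ) ≤ ((2*k+1:ℕ):ℝ)^d - ((2*(k-1)+1:ℕ):ℝ)^d := by
    have := Nat.cast_le (α := ℝ).2 hcard
    rwa [Nat.cast_sub hle, Nat.cast_pow, Nat.cast_pow] at this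
  set x : ℝ := ((2*k+1:ℕ):ℝ) with hx
  set y : ℝ := ((2*(k-1)+1:ℕ):ℝ) with hy
  have hxy : x - y = 2 := by rw [hx, hy]; push_cast [Nat.cast_sub hk]; ring
  have hgeom : x^d - y^d = (∑ i ∈ Finset.range d, x ^ i * y ^ (d - 1 - i)) * 2 := by
    rw [← hxy, geom_sum₂_mul]
  have hxpos : (0:ℝ) ≤ x := by positivity
  have hypos : (0:ℝ) ≤ y := by positivity
  have hyx : y ≤ x := by
    rw [hx, hy]
    have h : (2*(k-1)+1) ≤ 2*k+1 := by omega
    exact_mod_cast h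
  have hterm : ∀ i ∈ Finset.range d, x ^ i * y ^ (d - 1 - i) ≤ x ^ (d-1) := by
    intro i hi
    rw [Finset.mem_range] at hi
    calc x ^ i * y ^ (d-1-i) ≤ x ^ i * x ^ (d-1-i) := by
          gcongr
      _ = x ^ (i + (d-1-i)) := by rw [pow_add]
      _ = x ^ (d-1) := by congr 1; omega
  have hsum : ∑ i ∈ Finset.range d, x ^ i * y ^ (d - 1 - i) ≤ d * x ^ (d-1) := by
    calc ∑ i ∈ Finset.range d, x ^ i * y ^ (d - 1 - i) ≤ ∑ _i ∈ Finset.range d, x ^ (d-1) :=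
          Finset.sum_le_sum hterm
      _ = d * x ^ (d-1) := by rw [Finset.sum_const, Finset.card_range, nsmul_eq_mul]
  have hx3k : x ≤ 3 * k := by rw [hx]; push_cast; have : (1:ℝ) ≤ k := by exact_mod_cast hk
                              linarith
  have hxpow : x ^ (d-1) ≤ (3:ℝ)^(d-1) * (k:ℝ)^(d-1) := by
    rw [← mul_pow]
    exact pow_le_pow_left₀ hxpos hx3k _
  calc ((latSh d k).card : ℝ) ≤ x^d - y^d := hcast
    _ = (∑ i ∈ Finset.range d, x ^ i * y ^ (d - 1 - i)) * 2 := hgeom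
    _ ≤ (d * x ^ (d-1)) * 2 := mul_le_mul_of_nonneg_right hsum (by norm_num)
    _ ≤ (d * ((3:ℝ)^(d-1) * (k:ℝ)^(d-1))) * 2 :=
        mul_le_mul_of_nonneg_right
          (mul_le_mul_of_nonneg_left hxpow (Nat.cast_nonneg d)) (by norm_num)
    _ = (2*d*3^(d-1) : ℕ) * (k:ℝ)^(d-1) := by push_cast; ring

section main
variable (d : ℕ) (hd : 1 ≤ d) (s a : ℝ) (ha : a = s - (d:ℝ)) (ha0 : 0 < a) (ha1 : a < 1)
  (C : ℝ) (hC : 0 < C)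

include hd ha in
lemma comp1 (k : ℕ) (hk : 1 ≤ k) :
    ((k:ℝ)^(d-1:ℕ)) * (k:ℝ)^(-s) = (k:ℝ)^(-1-a) := by
  have hk0 : (0:ℝ) < k := by exact_mod_cast hk
  rw [← Real.rpow_natCast (k:ℝ) (d-1), ← Real.rpow_add hk0]
  congr 1
  rw [Nat.cast_sub hd]
  push_cast
  linarith [ha]

include hd ha in
lemma comp2 (k : ℕ) (hk : 1 ≤ k) :
    ((k:ℝ)^(d-1:ℕ)) * ((k:ℝ) * (k:ℝ)^(-s)) = (k:ℝ)^(-a) := by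
  have hk0 : (0:ℝ) < k := by exact_mod_cast hk
  nth_rewrite 2 [← Real.rpow_one (k:ℝ)]
  rw [← Real.rpow_natCast (k:ℝ) (d-1), ← Real.rpow_add hk0, ← Real.rpow_add hk0]
  congr 1
  rw [Nat.cast_sub hd]
  push_cast
  linarith [ha]

include hd ha ha0 ha1 hC in
lemma bigSumBnd (K : ℕ) (hK : 1 ≤ K) :
    ∑' x : Fin d → ℤ,
        (if K < latNN d x then ENNReal.ofReal (C * ((latNN d x : ℝ)) ^ (-s)) else 0)
      ≤ ENNReal.ofReal (C * (2*d*3^(d-1) : ℕ) * ((K:ℝ) ^ (-a) / a)) := by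
  set D : ℕ := 2*d*3^(d-1) with hD
  set F : ℕ → ENNReal := fun k => if K < k then ENNReal.ofReal (C * (k:ℝ) ^ (-s)) else 0
    with hF
  have h1 : ∑' x : Fin d → ℤ, F (latNN d x) = ∑' k : ℕ, (latSh d k).card * F k :=
    tsum_latNN d F
  rw [show (fun x : Fin d → ℤ =>
      (if K < latNN d x then ENNReal.ofReal (C * ((latNN d x : ℝ)) ^ (-s)) else 0))
      = fun x => F (latNN d x) from rfl]
  rw [h1]
  -- termwise bound
  have hterm : ∀ k : ℕ, ((latSh d k).card : ENNReal) * F k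
      ≤ ENNReal.ofReal (if K < k then C * D * (k:ℝ)^(-1-a) else 0) := by
    intro k
    by_cases hk : K < k
    · have hk1 : 1 ≤ k := le_trans hK hk.le
      simp only [hF, if_pos hk]
      have hcard := card_latSh d hd k hk1
      calc ((latSh d k).card : ENNReal) * ENNReal.ofReal (C * (k:ℝ) ^ (-s))
          = ENNReal.ofReal (((latSh d k).card : ℝ) * (C * (k:ℝ) ^ (-s))) := by
            rw [ENNReal.ofReal_mul (Nat.cast_nonneg _), ENNReal.ofReal_natCast]
        _ ≤ ENNReal.ofReal ((D * (k:ℝ)^(d-1:ℕ)) * (C * (k:ℝ) ^ (-s))) := by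
            apply ENNReal.ofReal_le_ofReal
            apply mul_le_mul_of_nonneg_right hcard
            positivity
        _ = ENNReal.ofReal (C * D * (k:ℝ)^(-1-a)) := by
            rw [← comp1 d hd s a ha k hk1]
            congr 1
            ring
    · simp only [hF, if_neg hk]
      simp
  refine le_trans (ENNReal.tsum_le_tsum hterm) ?_
  -- convert to real tsum
  have hgnn : ∀ k : ℕ, 0 ≤ (if K < k then C * D * (k:ℝ)^(-1-a) else 0) := by
    intro k
    split <;> positivity
  have hgsum : Summable (fun k : ℕ => if K < k then C * D * (k:ℝ)^(-1-a) else 0) := by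
    refine Summable.of_nonneg_of_le hgnn (fun k => ?_)
      (((Real.summable_nat_rpow.2 (by linarith : (-1-a) < -1)).mul_left (C * (D:ℝ))))
    split
    · exact le_rfl
    · positivity
  rw [← ENNReal.ofReal_tsum_of_nonneg hgnn hgsum]
  apply ENNReal.ofReal_le_ofReal
  have hsplit := Summable.sum_add_tsum_nat_add
    (f := fun k : ℕ => if K < k then C * D * (k:ℝ)^(-1-a) else 0) (K+1) hgsum
  have hhead : ∑ i ∈ Finset.range (K+1),
      (if K < i then C * D * ((i:ℕ):ℝ)^(-1-a) else 0) = 0 := by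
    apply Finset.sum_eq_zero
    intro i hi
    rw [Finset.mem_range] at hi
    rw [if_neg (by omega)]
  have htailcongr : ∀ j : ℕ, (if K < j + (K+1) then C * D * ((j + (K+1):ℕ):ℝ)^(-1-a) else 0)
      = C * D * ((K + 1 + j : ℕ):ℝ)^(-1-a) := by
    intro j
    rw [if_pos (by omega)]
    congr 3
    omega
  have hre : ∑' k : ℕ, (if K < k then C * D * ((k:ℕ):ℝ)^(-1-a) else 0)
      = C * D * ∑' j : ℕ, ((K + 1 + j : ℕ):ℝ)^(-1-a) := by
    rw [← hsplit, hhead, zero_add, tsum_congr htailcongr, tsum_mul_left]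
  rw [hre]
  have htail := tail_sum a ha0 ha1 K hK
  have hCD : (0:ℝ) ≤ C * D := by positivity
  calc C * D * ∑' j : ℕ, ((K + 1 + j : ℕ):ℝ)^(-1-a) ≤ C * D * ((K:ℝ)^(-a)/a) :=
        mul_le_mul_of_nonneg_left htail hCD
    _ = C * (D:ℝ) * ((K:ℝ)^(-a)/a) := by ring

include hd ha ha0 ha1 hC in
lemma smallSumBnd (K : ℕ) :
    ∑' x : Fin d → ℤ,
        (if latNN d x ≤ K then (latNN d x : ENNReal) * ENNReal.ofReal (C * ((latNN d x : ℝ)) ^ (-s)) else 0)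
      ≤ ENNReal.ofReal (C * (2*d*3^(d-1) : ℕ) * ((K:ℝ) ^ (1-a) / (1-a))) := by
  set D : ℕ := 2*d*3^(d-1) with hD
  set F : ℕ → ENNReal := fun k =>
    if k ≤ K then (k : ENNReal) * ENNReal.ofReal (C * (k:ℝ) ^ (-s)) else 0 with hF
  rw [show (fun x : Fin d → ℤ =>
      (if latNN d x ≤ K then (latNN d x : ENNReal) * ENNReal.ofReal (C * ((latNN d x : ℝ)) ^ (-s)) else 0))
      = fun x => F (latNN d x) from rfl, tsum_latNN d F]
  have hzero : ∀ k ∉ Finset.range (K+1), ((latSh d k).card : ENNReal) * F k = 0 := by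
    intro k hk
    rw [Finset.mem_range] at hk
    simp only [hF]
    rw [if_neg (by omega), mul_zero]
  rw [tsum_eq_sum hzero]
  have hterm : ∀ k ∈ Finset.range (K+1), ((latSh d k).card : ENNReal) * F k
      ≤ ENNReal.ofReal (C * D * (k:ℝ)^(-a)) := by
    intro k hk
    rw [Finset.mem_range] at hk
    rcases Nat.eq_zero_or_pos k with hk0 | hk1
    · subst hk0
      simp only [hF]
      simp
    · simp only [hF, if_pos (by omega : k ≤ K)]
      have hcard := card_latSh d hd k hk1
      calc ((latSh d k).card : ENNReal) * ((k : ENNReal) * ENNReal.ofReal (C * (k:ℝ) ^ (-s)))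
          = ENNReal.ofReal (((latSh d k).card : ℝ) * ((k:ℝ) * (C * (k:ℝ) ^ (-s)))) := by
            rw [ENNReal.ofReal_mul (Nat.cast_nonneg _), ENNReal.ofReal_mul (Nat.cast_nonneg _),
              ENNReal.ofReal_natCast, ENNReal.ofReal_natCast]
        _ ≤ ENNReal.ofReal ((D * (k:ℝ)^(d-1:ℕ)) * ((k:ℝ) * (C * (k:ℝ) ^ (-s)))) := by
            apply ENNReal.ofReal_le_ofReal
            apply mul_le_mul_of_nonneg_right hcard
            positivity
        _ = ENNReal.ofReal (C * D * (k:ℝ)^(-a)) := by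
            rw [← comp2 d hd s a ha k hk1]
            congr 1
            ring
  refine le_trans (Finset.sum_le_sum hterm) ?_
  rw [← ENNReal.ofReal_sum_of_nonneg (fun k _ => by positivity)]
  apply ENNReal.ofReal_le_ofReal
  rw [← Finset.mul_sum]
  have := head_sum a ha0 ha1 K
  calc C * (D:ℝ) * ∑ k ∈ Finset.range (K+1), (k:ℝ)^(-a)
      ≤ C * D * ((K:ℝ)^(1-a)/(1-a)) := mul_le_mul_of_nonneg_left this (by positivity)
    _ = C * (D:ℝ) * ((K:ℝ)^(1-a)/(1-a)) := by ring

end main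



lemma latNN_def (d : ℕ) (x : Fin d → ℤ) :
    latNN d x = Finset.univ.sup fun j => (x j).natAbs := rfl

lemma latNN_zero (d : ℕ) : latNN d 0 = 0 := by
  refine le_antisymm (Finset.sup_le fun j _ => by simp) (Nat.zero_le _)

lemma latNN_nn (d : ℕ) (x : Fin d → ℤ) : ‖x‖₊ = ((latNN d x : ℕ) : NNReal) := by
  rw [Pi.nnnorm_def, latNN_def]
  rw [Finset.comp_sup_eq_sup_comp (Nat.cast : ℕ → NNReal)
    (fun a b => by exact_mod_cast Nat.cast_max a b) (by simp)]
  congr 1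
  funext j
  simp [NNReal.natCast_natAbs]

lemma latNN_norm (d : ℕ) (x : Fin d → ℤ) : ‖x‖ = ((latNN d x : ℕ) : ℝ) := by
  rw [← coe_nnnorm, latNN_nn d x, NNReal.coe_natCast]

lemma latNN_ennnorm (d : ℕ) (x : Fin d → ℤ) : (‖x‖₊ : ENNReal) = ((latNN d x : ℕ) : ENNReal) := by
  rw [latNN_nn d x]
  exact_mod_cast rfl


lemma wint {Ω : Type*} [MeasurableSpace Ω] (P : Measure Ω) (f : Ω → ℕ)
    (hf : Measurable f) (hb : ∀ ω, f ω ≤ 1) :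
    ∫⁻ ω, (f ω : ENNReal) ∂P = P {ω | f ω = 1} := by
  have h : ∀ ω, ((f ω : ℕ) : ENNReal) = Set.indicator {ω | f ω = 1} 1 ω := by
    intro ω
    by_cases h1 : f ω = 1
    · have hm : ω ∈ {ω | f ω = 1} := h1
      rw [Set.indicator_of_mem hm]
      simp [h1]
    · have hm : ω ∉ {ω | f ω = 1} := h1
      have h0 : f ω = 0 := by have := hb ω; omega
      rw [Set.indicator_of_notMem hm]
      simp [h0]
  rw [lintegral_congr h, lintegral_indicator_one]
  exact hf (measurableSet_singleton 1)

end prelim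

/-- With α = s − d ∈ (0,1) and independent Bernoulli variables
w_i(x) with P(w_i(x)=1) ≤ C‖x‖^{-s}, the total jump size satisfies the stable tail
bound P(n^{-1/α} ∑_{i<n} ∑_x ‖x‖ w_i(x) > y) ≤ c y^{-α}. -/
theorem stmt_6 {Ω : Type*} [MeasurableSpace Ω] (P : Measure Ω) [IsProbabilityMeasure P]
    (d : ℕ) (hd : 1 ≤ d) (s : ℝ) (hs₁ : (d : ℝ) < s) (hs₂ : s < d + 1)
    (α : ℝ) (hα : α = s - d) (C : ℝ) (hC : 0 < C)
    (w : ℕ → (Fin d → ℤ) → Ω → ℕ) (hmeas : ∀ i x, Measurable (w i x))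
    (hval : ∀ i x ω, w i x ω ≤ 1)
    (hindep : iIndepFun
      (fun q : ℕ × (Fin d → ℤ) => w q.1 q.2) P)
    (hlaw : ∀ i : ℕ, ∀ x : Fin d → ℤ, x ≠ 0 →
      P {ω | w i x ω = 1} ≤ ENNReal.ofReal (C * ‖x‖ ^ (-s))) :
    ∃ c : ℝ, 0 < c ∧ ∃ N : ℕ, ∀ n : ℕ, N ≤ n → ∀ y : ℝ, 0 < y →
      P {ω | ENNReal.ofReal y <
          ENNReal.ofReal ((n : ℝ) ^ (-(1 : ℝ) / α)) *
            ∑ i ∈ Finset.range n, ∑' x : Fin d → ℤ, (‖x‖₊ : ENNReal) * (w i x ω : ENNReal)}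
        ≤ ENNReal.ofReal (c * y ^ (-α)) := by
  classical
  have hα0 : 0 < α := by rw [hα]; linarith
  have hα1 : α < 1 := by rw [hα]; linarith
  set D : ℕ := 2*d*3^(d-1) with hD
  have hDpos : 0 < D := Nat.mul_pos (by omega) (Nat.pow_pos (by norm_num))
  have hDR : (0:ℝ) < (D:ℝ) := by exact_mod_cast hDpos
  set c1 : ℝ := C * (D:ℝ) / α with hc1
  set c2 : ℝ := 2 * C * (D:ℝ) / (1-α) with hc2
  have hc10 : 0 < c1 := div_pos (mul_pos hC hDR) hα0
  have hc20 : 0 < c2 := div_pos (mul_pos (mul_pos two_pos hC) hDR) (by linarith)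
  refine ⟨1 + c1 + c2, by linarith, 1, ?_⟩
  intro n hn y hy
  by_cases hy1 : y ≤ 1
  · have h1 : (1:ℝ) ≤ y^(-α) := by
      have := Real.rpow_le_rpow_of_nonpos hy hy1 (neg_nonpos.mpr hα0.le)
      rwa [Real.one_rpow] at this
    calc P _ ≤ 1 := prob_le_one
      _ = ENNReal.ofReal 1 := ENNReal.ofReal_one.symm
      _ ≤ ENNReal.ofReal ((1 + c1 + c2) * y ^ (-α)) :=
          ENNReal.ofReal_le_ofReal (by nlinarith)
  · push_neg at hy1
    have hnR : (1:ℝ) ≤ (n:ℝ) := by exact_mod_cast hn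
    set b : ℝ := (n:ℝ)^((1:ℝ)/α) with hb
    have hb1 : 1 ≤ b := Real.one_le_rpow hnR (by positivity)
    have hb0 : 0 < b := lt_of_lt_of_le one_pos hb1
    set t : ℝ := y * b with htdef
    have ht1 : 1 < t := by nlinarith
    have ht0 : 0 < t := by linarith
    set K : ℕ := ⌈t⌉₊ with hKdef
    have hK1 : 1 ≤ K := Nat.one_le_ceil_iff.2 ht0
    have htK : t ≤ (K:ℝ) := Nat.le_ceil t
    have hKt : (K:ℝ) ≤ 2*t := by
      have := Nat.ceil_lt_add_one ht0.le
      linarith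
    have hy0 : (0:ℝ) ≤ y := hy.le
    have hn0 : (n:ℝ) ≠ 0 := by linarith
    have hbneg : b^(-α) = (n:ℝ)⁻¹ := by
      rw [hb, ← Real.rpow_mul (by positivity)]
      rw [show (1:ℝ)/α * (-α) = (-1 : ℝ) by field_simp]
      exact Real.rpow_neg_one _
    have hkey : (n:ℝ) * t^(-α) = y^(-α) := by
      rw [htdef, Real.mul_rpow hy0 hb0.le, hbneg, mul_comm (y^(-α)), ← mul_assoc,
        mul_inv_cancel₀ hn0, one_mul]
    set A : Set Ω := ⋃ q : ℕ × (Fin d → ℤ),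
      (if q.1 < n ∧ K < latNN d q.2 then {ω | w q.1 q.2 ω = 1} else ∅) with hA
    set T' : Ω → ENNReal := fun ω => ∑ i ∈ Finset.range n, ∑' x : Fin d → ℤ,
      (if latNN d x ≤ K then (‖x‖₊ : ENNReal) * (w i x ω : ENNReal) else 0) with hT'
    set B : Set Ω := {ω | ENNReal.ofReal t ≤ T' ω} with hB
    -- inclusion
    have hsub : {ω | ENNReal.ofReal y <
          ENNReal.ofReal ((n : ℝ) ^ (-(1 : ℝ) / α)) *
            ∑ i ∈ Finset.range n, ∑' x : Fin d → ℤ, (‖x‖₊ : ENNReal) * (w i x ω : ENNReal)}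
        ⊆ A ∪ B := by
      intro ω hω
      simp only [Set.mem_setOf_eq] at hω
      have hobne : ENNReal.ofReal b ≠ 0 := (ENNReal.ofReal_pos.2 hb0).ne'
      have hobtop : ENNReal.ofReal b ≠ ⊤ := ENNReal.ofReal_ne_top
      have hconv : ENNReal.ofReal ((n:ℝ)^(-(1:ℝ)/α)) = (ENNReal.ofReal b)⁻¹ := by
        rw [show (-(1:ℝ)/α) = -((1:ℝ)/α) by ring, Real.rpow_neg (by positivity), hb,
          ENNReal.ofReal_inv_of_pos (by rw [← hb]; exact hb0)]
      rw [hconv] at hω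
      have h2 : ENNReal.ofReal t < ∑ i ∈ Finset.range n, ∑' x : Fin d → ℤ,
          (‖x‖₊ : ENNReal) * (w i x ω : ENNReal) := by
        have h3 := (ENNReal.mul_lt_mul_iff_right hobne hobtop).2 hω
        rw [← mul_assoc, ENNReal.mul_inv_cancel hobne hobtop, one_mul] at h3
        calc ENNReal.ofReal t = ENNReal.ofReal b * ENNReal.ofReal y := by
              rw [htdef, ENNReal.ofReal_mul hy0, mul_comm]
          _ < _ := h3
      by_cases hAmem : ω ∈ A
      · exact Or.inl hAmem
      · right
        have hnotA : ∀ i x, i < n → K < latNN d x → w i x ω = 0 := by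
          intro i x hi hx
          by_contra hne
          have hw1 : w i x ω = 1 := by have := hval i x ω; omega
          exact hAmem (Set.mem_iUnion.2 ⟨(i,x), by rw [if_pos ⟨hi, hx⟩]; exact hw1⟩)
        have hTT : T' ω = ∑ i ∈ Finset.range n, ∑' x : Fin d → ℤ,
            (‖x‖₊ : ENNReal) * (w i x ω : ENNReal) := by
          rw [hT']
          refine Finset.sum_congr rfl fun i hi => tsum_congr fun x => ?_
          by_cases hx : latNN d x ≤ K
          · rw [if_pos hx]
          · rw [if_neg hx, hnotA i x (Finset.mem_range.1 hi) (lt_of_not_ge hx)]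
            simp
        show ENNReal.ofReal t ≤ T' ω
        rw [hTT]
        exact h2.le
    have hterm_meas : ∀ i x, Measurable (fun ω =>
        (if latNN d x ≤ K then (‖x‖₊ : ENNReal) * (w i x ω : ENNReal) else 0)) := by
      intro i x
      by_cases h : latNN d x ≤ K
      · simp only [if_pos h]
        exact (measurable_from_top.comp (hmeas i x)).const_mul _
      · simp only [if_neg h]
        exact measurable_const
    -- P A bound
    have hPA : P A ≤ ENNReal.ofReal (c1 * y^(-α)) := by
      have hstep1 : P A ≤ ∑' q : ℕ × (Fin d → ℤ),
          P (if q.1 < n ∧ K < latNN d q.2 then {ω | w q.1 q.2 ω = 1} else ∅) :=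
        measure_iUnion_le _
      have hstep2 : ∀ q : ℕ × (Fin d → ℤ),
          P (if q.1 < n ∧ K < latNN d q.2 then {ω | w q.1 q.2 ω = 1} else ∅)
          ≤ (if q.1 < n then (if K < latNN d q.2 then
              ENNReal.ofReal (C * ((latNN d q.2 : ℝ)) ^ (-s)) else 0) else 0) := by
        intro q
        by_cases h1 : q.1 < n ∧ K < latNN d q.2
        · rw [if_pos h1, if_pos h1.1, if_pos h1.2]
          have hx0 : q.2 ≠ 0 := by
            intro h0
            rw [h0, latNN_zero] at h1
            omega
          have := hlaw q.1 q.2 hx0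
          rwa [latNN_norm d q.2] at this
        · rw [if_neg h1]
          simp only [measure_empty]
          exact zero_le
      have hns : (0:ℝ) ≤ (n:ℝ) := Nat.cast_nonneg n
      calc P A ≤ _ := hstep1
        _ ≤ ∑' q : ℕ × (Fin d → ℤ), (if q.1 < n then (if K < latNN d q.2 then
              ENNReal.ofReal (C * ((latNN d q.2 : ℝ)) ^ (-s)) else 0) else 0) :=
            ENNReal.tsum_le_tsum hstep2
        _ = ∑' i : ℕ, ∑' x : Fin d → ℤ, (if i < n then (if K < latNN d x then
              ENNReal.ofReal (C * ((latNN d x : ℝ)) ^ (-s)) else 0) else 0) :=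
            ENNReal.tsum_prod (f := fun i x => if i < n then (if K < latNN d x then
              ENNReal.ofReal (C * ((latNN d x : ℝ)) ^ (-s)) else 0) else 0)
        _ = ∑' i : ℕ, (if i < n then (∑' x : Fin d → ℤ, (if K < latNN d x then
              ENNReal.ofReal (C * ((latNN d x : ℝ)) ^ (-s)) else 0)) else 0) := by
            refine tsum_congr fun i => ?_
            by_cases hi : i < n
            · simp only [if_pos hi]
            · simp only [if_neg hi, tsum_zero]
        _ = ∑ i ∈ Finset.range n, (if i < n then (∑' x : Fin d → ℤ, (if K < latNN d x then
              ENNReal.ofReal (C * ((latNN d x : ℝ)) ^ (-s)) else 0)) else 0) :=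
            tsum_eq_sum (fun i hi => by rw [if_neg (by simpa using hi)])
        _ = (n : ENNReal) * ∑' x : Fin d → ℤ, (if K < latNN d x then
              ENNReal.ofReal (C * ((latNN d x : ℝ)) ^ (-s)) else 0) := by
            rw [Finset.sum_congr rfl (fun i hi => if_pos (Finset.mem_range.1 hi)),
              Finset.sum_const, Finset.card_range, nsmul_eq_mul]
        _ ≤ (n:ENNReal) * ENNReal.ofReal (C * (D:ℕ) * ((K:ℝ)^(-α)/α)) :=
            mul_le_mul_right (bigSumBnd d hd s α hα hα0 hα1 C hC K hK1) _
        _ = ENNReal.ofReal ((n:ℝ) * (C * (D:ℝ) * ((K:ℝ)^(-α)/α))) := by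
            rw [ENNReal.ofReal_mul hns, ENNReal.ofReal_natCast]
        _ ≤ ENNReal.ofReal (c1 * y^(-α)) := by
            apply ENNReal.ofReal_le_ofReal
            have hKa : (K:ℝ)^(-α) ≤ t^(-α) :=
              Real.rpow_le_rpow_of_nonpos ht0 htK (by linarith)
            have hstep : (n:ℝ) * (C * (D:ℝ) * ((K:ℝ)^(-α)/α))
                ≤ (n:ℝ) * (C * (D:ℝ) * (t^(-α)/α)) := by gcongr
            refine hstep.trans ?_
            have heq : (n:ℝ) * (C * (D:ℝ) * (t^(-α)/α)) = c1 * ((n:ℝ) * t^(-α)) := by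
              rw [hc1]; field_simp
            rw [heq, hkey]
    -- P B bound
    have hT'm : Measurable T' :=
      Finset.measurable_sum _ (fun i _ => Measurable.ennreal_tsum (fun x => hterm_meas i x))
    have hotne : ENNReal.ofReal t ≠ 0 := (ENNReal.ofReal_pos.2 ht0).ne'
    have hottop : ENNReal.ofReal t ≠ ⊤ := ENNReal.ofReal_ne_top
    have hPB1 : P B ≤ (∫⁻ ω, T' ω ∂P) / ENNReal.ofReal t := by
      rw [ENNReal.le_div_iff_mul_le (Or.inl hotne) (Or.inl hottop)]
      calc P B * ENNReal.ofReal t = ENNReal.ofReal t * P B := mul_comm _ _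
        _ ≤ _ := mul_meas_ge_le_lintegral₀ hT'm.aemeasurable (ENNReal.ofReal t)
    have hlint : ∫⁻ ω, T' ω ∂P ≤ (n:ENNReal) *
        ENNReal.ofReal (C * (D:ℝ) * ((K:ℝ)^(1-α)/(1-α))) := by
      rw [hT', lintegral_finset_sum _
        (fun i _ => Measurable.ennreal_tsum (fun x => hterm_meas i x))]
      have hone : ∀ i ∈ Finset.range n,
          (∫⁻ ω, (∑' x : Fin d → ℤ,
            (if latNN d x ≤ K then (‖x‖₊ : ENNReal) * (w i x ω : ENNReal) else 0)) ∂P)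
          ≤ ENNReal.ofReal (C * (D:ℝ) * ((K:ℝ)^(1-α)/(1-α))) := by
        intro i _
        rw [lintegral_tsum (fun x => (hterm_meas i x).aemeasurable)]
        have hx_le : ∀ x : Fin d → ℤ,
            (∫⁻ ω, (if latNN d x ≤ K then (‖x‖₊ : ENNReal) * (w i x ω : ENNReal) else 0) ∂P)
            ≤ (if latNN d x ≤ K then
                (latNN d x : ENNReal) * ENNReal.ofReal (C * ((latNN d x : ℝ)) ^ (-s)) else 0) := by
          intro x
          by_cases h : latNN d x ≤ K
          · simp only [if_pos h]
            have hm : Measurable (fun ω => ((w i x ω : ℕ) : ENNReal)) :=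
              measurable_from_top.comp (hmeas i x)
            rw [lintegral_const_mul _ hm, wint P (w i x) (hmeas i x) (hval i x)]
            by_cases hx0 : x = 0
            · subst hx0
              simp [latNN_zero]
            · rw [latNN_ennnorm d x]
              apply mul_le_mul_right
              have := hlaw i x hx0
              rwa [latNN_norm d x] at this
          · simp only [if_neg h]
            simp
        refine le_trans (ENNReal.tsum_le_tsum hx_le) ?_
        have := smallSumBnd d hd s α hα hα0 hα1 C hC K
        convert this using 3
      calc ∑ i ∈ Finset.range n, (∫⁻ ω, (∑' x : Fin d → ℤ,
            (if latNN d x ≤ K then (‖x‖₊ : ENNReal) * (w i x ω : ENNReal) else 0)) ∂P)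
          ≤ ∑ _i ∈ Finset.range n, ENNReal.ofReal (C * (D:ℝ) * ((K:ℝ)^(1-α)/(1-α))) :=
            Finset.sum_le_sum hone
        _ = (n:ENNReal) * ENNReal.ofReal (C * (D:ℝ) * ((K:ℝ)^(1-α)/(1-α))) := by
            rw [Finset.sum_const, Finset.card_range, nsmul_eq_mul]
    have hPB : P B ≤ ENNReal.ofReal (c2 * y^(-α)) := by
      refine hPB1.trans ?_
      have h1 : (n:ENNReal) * ENNReal.ofReal (C * (D:ℝ) * ((K:ℝ)^(1-α)/(1-α)))
          = ENNReal.ofReal ((n:ℝ) * (C * (D:ℝ) * ((K:ℝ)^(1-α)/(1-α)))) := by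
        rw [ENNReal.ofReal_mul (Nat.cast_nonneg n), ENNReal.ofReal_natCast]
      calc (∫⁻ ω, T' ω ∂P) / ENNReal.ofReal t
          ≤ ((n:ENNReal) * ENNReal.ofReal (C * (D:ℝ) * ((K:ℝ)^(1-α)/(1-α))))
              / ENNReal.ofReal t := ENNReal.div_le_div_right hlint _
        _ = ENNReal.ofReal ((n:ℝ) * (C * (D:ℝ) * ((K:ℝ)^(1-α)/(1-α))) / t) := by
            rw [h1, ENNReal.ofReal_div_of_pos ht0]
        _ ≤ ENNReal.ofReal (c2 * y^(-α)) := by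
            apply ENNReal.ofReal_le_ofReal
            have hKb : (K:ℝ)^(1-α) ≤ 2 * (t^(-α) * t) := by
              have hta : t^(1-α) = t^(-α) * t := by
                rw [show (1-α : ℝ) = -α + 1 by ring, Real.rpow_add ht0, Real.rpow_one]
              rw [← hta]
              calc (K:ℝ)^(1-α) ≤ (2*t)^(1-α) :=
                    Real.rpow_le_rpow (Nat.cast_nonneg K) hKt (by linarith)
                _ = 2^(1-α) * t^(1-α) := Real.mul_rpow (by norm_num) ht0.le
                _ ≤ 2 * t^(1-α) := by
                    have h2 : (2:ℝ)^(1-α) ≤ 2^(1:ℝ) :=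
                      Real.rpow_le_rpow_of_exponent_le (by norm_num) (by linarith)
                    rw [Real.rpow_one] at h2
                    exact mul_le_mul_of_nonneg_right h2 (by positivity)
            have hstep : (n:ℝ) * (C * (D:ℝ) * ((K:ℝ)^(1-α)/(1-α))) / t
                ≤ (n:ℝ) * (C * (D:ℝ) * ((2 * (t^(-α) * t))/(1-α))) / t := by
              gcongr
            refine hstep.trans ?_
            have heq : ∀ T R : ℝ, T ≠ 0 → (n:ℝ) * (C * (D:ℝ) * ((2 * (R * T))/(1-α))) / T
                = c2 * ((n:ℝ) * R) := by
              intro T R hT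
              rw [hc2]
              have h1a : (1:ℝ) - α ≠ 0 := by linarith
              field_simp
            rw [heq t (t^(-α)) ht0.ne', hkey]
    calc P _ ≤ P (A ∪ B) := measure_mono hsub
      _ ≤ P A + P B := measure_union_le A B
      _ ≤ ENNReal.ofReal (c1*y^(-α)) + ENNReal.ofReal (c2*y^(-α)) := add_le_add hPA hPB
      _ = ENNReal.ofReal (c1*y^(-α) + c2*y^(-α)) :=
          (ENNReal.ofReal_add (mul_nonneg hc10.le (Real.rpow_nonneg hy0 _))
            (mul_nonneg hc20.le (Real.rpow_nonneg hy0 _))).symm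
      _ ≤ ENNReal.ofReal ((1 + c1 + c2) * y^(-α)) :=
          ENNReal.ofReal_le_ofReal (by nlinarith [Real.rpow_nonneg hy0 (-α)])
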